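/- For any density matrix ρ, the fidelity of imaginarity satisfies F_I(ρ) = 1/2 + (1/4)‖ρ − ρ^T‖₁, where ‖·‖₁ is the trace norm and ρ^T is the transpose in the computational basis. -/

import Mathlib

open Matrix ComplexOrder

/-- The trace norm of a complex matrix: the sum of its singular values, i.e. tr √(AᴴA). -/
noncomputable def traceNorm {d : Type*} [Fintype d] [DecidableEq d]
    (A : Matrix d d ℂ) : ℝ :=
  (((Matrix.posSemidef_conjTranspose_mul_self A).1.eigenvectorUnitary.1 *
      diagonal (((↑) : ℝ → ℂ) ∘ Real.sqrt ∘ (Matrix.posSemidef_conjTranspose_mul_self A).1.eigenvalues) *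
      (star (Matrix.posSemidef_conjTranspose_mul_self A).1.eigenvectorUnitary : Matrix d d ℂ)).trace).re

/-- Projector onto the maximally imaginary state |+̂⟩ = (|0⟩ + i|1⟩)/√2. -/
noncomputable def Pplus : Matrix (Fin 2) (Fin 2) ℂ :=
  (1/2 : ℂ) • !![1, -Complex.I; Complex.I, 1]

/-- For any density matrix ρ, the fidelity of imaginarity (maximal fidelity of the
output of a real CPTP map with |+̂⟩, attained) equals 1/2 + ‖ρ − ρᵀ‖₁/4. -/

theorem traceNorm_herm {d : Type*} [Fintype d] [DecidableEq d] {M : Matrix d d ℂ}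
    (hM : M.IsHermitian) : traceNorm M = ∑ i, |hM.eigenvalues i| := by
  set U : Matrix d d ℂ := (hM.eigenvectorUnitary : Matrix d d ℂ) with hU
  have hUU : star U * U = 1 := mem_unitaryGroup_iff'.mp hM.eigenvectorUnitary.2
  set D : Matrix d d ℂ := diagonal (fun i => ((|hM.eigenvalues i| : ℝ) : ℂ)) with hD
  have hDpsd : D.PosSemidef := PosSemidef.diagonal (fun i => by positivity)
  set S : Matrix d d ℂ := U * D * star U with hS
  have hSpsd : S.PosSemidef := by
    rw [hS, Matrix.star_eq_conjTranspose]; exact hDpsd.mul_mul_conjTranspose_same U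
  have hsq : S ^ 2 = Mᴴ * M := by
    have h1 : Mᴴ * M = U * (diagonal (RCLike.ofReal ∘ hM.eigenvalues) *
        diagonal (RCLike.ofReal ∘ hM.eigenvalues)) * star U := by
      conv_lhs => rw [hM.eq, hM.spectral_theorem, Unitary.conjStarAlgAut_apply]
      simp only [Matrix.mul_assoc, hU]
      rw [← Matrix.mul_assoc (star U) U, hUU, Matrix.one_mul]
    have h2 : S ^ 2 = U * (D * D) * star U := by
      rw [pow_two, hS]
      simp only [Matrix.mul_assoc]
      rw [← Matrix.mul_assoc (star U) U, hUU, Matrix.one_mul]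
    rw [h1, h2, diagonal_mul_diagonal, diagonal_mul_diagonal]
    congr 1
    ext i
    simp [hD, ← Complex.ofReal_mul, abs_mul_abs_self, Function.comp]
  have hsqrt : S = (Matrix.posSemidef_conjTranspose_mul_self M).1.eigenvectorUnitary.1 *
      diagonal (((↑) : ℝ → ℂ) ∘ Real.sqrt ∘ (Matrix.posSemidef_conjTranspose_mul_self M).1.eigenvalues) *
      (star (Matrix.posSemidef_conjTranspose_mul_self M).1.eigenvectorUnitary : Matrix d d ℂ) := by
    open scoped MatrixOrder in (
      have hP := Matrix.posSemidef_conjTranspose_mul_self M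
      have hC : CFC.sqrt (Mᴴ * M) = S :=
        CFC.sqrt_unique (by rw [← pow_two, hsq]) (nonneg_iff_posSemidef.mpr hSpsd)
      rw [← hC, CFC.sqrt_eq_cfc, cfc_nnreal_eq_real _ _ (nonneg_iff_posSemidef.mpr hP), hP.1.cfc_eq]
      simp only [IsHermitian.cfc, Unitary.conjStarAlgAut_apply]
      congr 3
      funext i
      simp [Real.coe_toNNReal', max_eq_left (hP.eigenvalues_nonneg i)])
  rw [traceNorm, ← hsqrt, hS, Matrix.trace_mul_cycle, hUU, Matrix.one_mul, Matrix.trace_diagonal]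
  simp


noncomputable def Ymat : Matrix (Fin 2) (Fin 2) ℂ := !![0, -Complex.I; Complex.I, 0]

lemma Ymat_transpose : Ymatᵀ = -Ymat := by
  ext i j; fin_cases i <;> fin_cases j <;> simp [Ymat]

lemma Pplus_eq : Pplus = (1/2 : ℂ) • (1 + Ymat) := by
  rw [Pplus, Ymat, Matrix.one_fin_two]
  congr 1
  ext i j; fin_cases i <;> fin_cases j <;> simp

lemma trace_mul_Pplus (σ : Matrix (Fin 2) (Fin 2) ℂ) :
    (σ * Pplus).trace = (1/2 : ℂ) * σ.trace + (1/2 : ℂ) * (σ * Ymat).trace := by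
  rw [Pplus_eq, Matrix.mul_smul, Matrix.trace_smul, Matrix.mul_add, Matrix.trace_add,
    Matrix.mul_one, smul_eq_mul, mul_add]

lemma key_identity {d : ℕ} (ρ : Matrix (Fin d) (Fin d) ℂ)
    (K : Matrix (Fin 2) (Fin d) ℂ) (hK : Kᴴ = Kᵀ) :
    (K * ρ * Kᴴ * Ymat).trace = (1/2 : ℂ) * ((ρ - ρᵀ) * (Kᵀ * Ymat * K)).trace := by
  have h1 : (K * ρ * Kᴴ * Ymat).trace = (ρ * (Kᵀ * Ymat * K)).trace := by
    rw [hK, show K * ρ * Kᵀ * Ymat = K * (ρ * (Kᵀ * Ymat)) by simp only [Matrix.mul_assoc],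
      Matrix.trace_mul_comm]
    simp only [Matrix.mul_assoc]
  have h2 : (ρᵀ * (Kᵀ * Ymat * K)).trace = -(ρ * (Kᵀ * Ymat * K)).trace := by
    have := Matrix.trace_transpose (ρᵀ * (Kᵀ * Ymat * K))
    rw [Matrix.transpose_mul, Matrix.transpose_transpose, Matrix.transpose_mul,
      Matrix.transpose_mul, Matrix.transpose_transpose, Ymat_transpose] at this
    rw [← this, Matrix.trace_mul_comm]
    simp only [Matrix.mul_neg, Matrix.neg_mul, Matrix.trace_neg, Matrix.mul_assoc]
  rw [Matrix.sub_mul, Matrix.trace_sub, h1, h2]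
  ring


lemma real_entries_conjTranspose {m n : Type*} [Fintype m] [Fintype n]
    {K : Matrix m n ℂ} (h : ∀ a b, (K a b).im = 0) : Kᴴ = Kᵀ := by
  ext a b
  simp only [conjTranspose_apply, transpose_apply, RCLike.star_def]
  exact Complex.conj_eq_iff_im.mpr (h b a)

lemma trace_diagonal_mul {n : Type*} [Fintype n] [DecidableEq n]
    (f : n → ℂ) (C : Matrix n n ℂ) :
    (Matrix.diagonal f * C).trace = ∑ i, f i * C i i := by
  simp [Matrix.trace, Matrix.diag, Matrix.mul_apply, Matrix.diagonal]



lemma trace_diagonal_mul' {n : Type*} [Fintype n] [DecidableEq n]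
    (f : n → ℂ) (C : Matrix n n ℂ) :
    (Matrix.diagonal f * C).trace = ∑ i, f i * C i i := by
  simp [Matrix.trace, Matrix.diag, Matrix.mul_apply, Matrix.diagonal]

lemma posSemidef_diag_nonneg {n : Type*} [Fintype n] [DecidableEq n]
    {A : Matrix n n ℂ} (hA : A.PosSemidef) (i : n) : 0 ≤ A i i := by
  exact hA.diag_nonneg

lemma posSemidef_one_add_Y : (1 + Ymat).PosSemidef := by
  have h : 1 + Ymat = !![(1:ℂ); Complex.I] * !![(1:ℂ); Complex.I]ᴴ := by
    ext i j
    fin_cases i <;> fin_cases j <;>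
      simp [Ymat, Matrix.one_apply, Matrix.mul_apply, Complex.ext_iff]
  rw [h]
  exact posSemidef_self_mul_conjTranspose _

lemma posSemidef_one_sub_Y : (1 - Ymat).PosSemidef := by
  have h : 1 - Ymat = !![(1:ℂ); -Complex.I] * !![(1:ℂ); -Complex.I]ᴴ := by
    ext i j
    fin_cases i <;> fin_cases j <;>
      simp [Ymat, Matrix.one_apply, Matrix.mul_apply, Complex.ext_iff]
  rw [h]
  exact posSemidef_self_mul_conjTranspose _

lemma upper_bound {d : ℕ} {M : Matrix (Fin d) (Fin d) ℂ} (hM : M.IsHermitian)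
    {n : ℕ} (K : Fin n → Matrix (Fin 2) (Fin d) ℂ)
    (hsum : ∑ j, (K j)ᴴ * K j = 1) :
    (∑ j, (M * ((K j)ᴴ * Ymat * K j)).trace).re ≤ ∑ i, |hM.eigenvalues i| := by
  set U : Matrix (Fin d) (Fin d) ℂ := (hM.eigenvectorUnitary : Matrix (Fin d) (Fin d) ℂ) with hU
  have hUU : star U * U = 1 := mem_unitaryGroup_iff'.mp hM.eigenvectorUnitary.2
  set e : Fin d → ℝ := hM.eigenvalues with he
  set B : Fin n → Matrix (Fin d) (Fin d) ℂ := fun j => (K j)ᴴ * Ymat * K j with hB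
  set C : Fin n → Matrix (Fin d) (Fin d) ℂ := fun j => star U * B j * U with hC
  set Gc : Fin n → Matrix (Fin d) (Fin d) ℂ := fun j => star U * ((K j)ᴴ * K j) * U with hGc
  -- trace formula
  have step1 : ∀ j, (M * B j).trace = ∑ i, ((e i : ℂ)) * (C j) i i := by
    intro j
    conv_lhs => rw [hM.spectral_theorem, Unitary.conjStarAlgAut_apply]
    rw [show (U * diagonal (RCLike.ofReal ∘ e) * star U) * B j
        = U * ((diagonal (RCLike.ofReal ∘ e) * (star U * B j))) by
      simp only [Matrix.mul_assoc], Matrix.trace_mul_comm,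
      show (diagonal (RCLike.ofReal ∘ e) * (star U * B j)) * U
        = diagonal (RCLike.ofReal ∘ e) * (star U * B j * U) by simp only [Matrix.mul_assoc],
      trace_diagonal_mul']
    rfl
  -- psd bounds
  have key : ∀ j i, |((C j) i i).re| ≤ ((Gc j) i i).re := by
    intro j i
    have hplus : (Gc j + C j).PosSemidef := by
      have h1 : ((K j)ᴴ * (1 + Ymat) * (K j)).PosSemidef :=
        posSemidef_one_add_Y.conjTranspose_mul_mul_same (K j)
      have h2 := h1.conjTranspose_mul_mul_same U
      rw [Matrix.star_eq_conjTranspose] at *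
      convert h2 using 1
      rw [hGc, hC, hB]
      simp only [Matrix.mul_add, Matrix.add_mul, Matrix.mul_one]
      try abel
    have hminus : (Gc j - C j).PosSemidef := by
      have h1 : ((K j)ᴴ * (1 - Ymat) * (K j)).PosSemidef :=
        posSemidef_one_sub_Y.conjTranspose_mul_mul_same (K j)
      have h2 := h1.conjTranspose_mul_mul_same U
      rw [Matrix.star_eq_conjTranspose] at *
      convert h2 using 1
      rw [hGc, hC, hB]
      simp only [Matrix.mul_sub, Matrix.sub_mul, Matrix.mul_one]
      try abel
    have h3 := (Complex.nonneg_iff.mp (posSemidef_diag_nonneg hplus i)).1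
    have h4 := (Complex.nonneg_iff.mp (posSemidef_diag_nonneg hminus i)).1
    rw [Matrix.add_apply, Complex.add_re] at h3
    rw [Matrix.sub_apply, Complex.sub_re] at h4
    rw [abs_le]; constructor <;> linarith
  -- sum of Gc is 1
  have hGsum : ∀ i, ∑ j, ((Gc j) i i).re = 1 := by
    intro i
    have : ∑ j, Gc j = 1 := by
      rw [hGc, ← Finset.sum_mul, ← Finset.mul_sum, hsum, Matrix.mul_one, hUU]
    calc ∑ j, ((Gc j) i i).re = ((∑ j, Gc j) i i).re := by
          rw [Matrix.sum_apply, Complex.re_sum]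
      _ = 1 := by rw [this]; simp [Matrix.one_apply]
  -- put together
  calc (∑ j, (M * B j).trace).re = ∑ j, ∑ i, (e i) * ((C j) i i).re := by
        rw [Complex.re_sum]
        refine Finset.sum_congr rfl fun j _ => ?_
        rw [step1, Complex.re_sum]
        exact Finset.sum_congr rfl fun i _ => by
          rw [Complex.mul_re, Complex.ofReal_re, Complex.ofReal_im]; ring
    _ ≤ ∑ j, ∑ i, |e i| * ((Gc j) i i).re := by
        refine Finset.sum_le_sum fun j _ => Finset.sum_le_sum fun i _ => ?_
        calc (e i) * ((C j) i i).re ≤ |e i| * |((C j) i i).re| := by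
              rw [← abs_mul]; exact le_abs_self _
          _ ≤ |e i| * ((Gc j) i i).re :=
              mul_le_mul_of_nonneg_left (key j i) (abs_nonneg _)
    _ = ∑ i, |e i| * ∑ j, ((Gc j) i i).re := by
        rw [Finset.sum_comm]
        exact Finset.sum_congr rfl fun i _ => (Finset.mul_sum _ _ _).symm
    _ = ∑ i, |e i| := by
        refine Finset.sum_congr rfl fun i _ => ?_
        rw [hGsum i, mul_one]


noncomputable def rowsK {d : ℕ} (u w : Fin d → ℂ) : Matrix (Fin 2) (Fin d) ℂ :=
  Matrix.of ![u, w]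

lemma trace_mul_Ymat (A : Matrix (Fin 2) (Fin 2) ℂ) :
    (A * Ymat).trace = Complex.I * (A 0 1 - A 1 0) := by
  simp [Matrix.trace_fin_two, Matrix.mul_apply, Fin.sum_univ_two, Ymat]
  ring

lemma rowsK_conjT_mul {d : ℕ} (u w : Fin d → ℂ) (a b : Fin d) :
    ((rowsK u w)ᴴ * rowsK u w) a b = star (u a) * u b + star (w a) * w b := by
  simp [rowsK, Matrix.mul_apply, Matrix.conjTranspose_apply, Fin.sum_univ_two]

lemma rowsK_mul_mul {d : ℕ} (u w : Fin d → ℂ) (N : Matrix (Fin d) (Fin d) ℂ) (r s : Fin 2) :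
    (rowsK u w * N * (rowsK u w)ᴴ) r s
      = ∑ a, ∑ b, (![u, w] r) a * N a b * star ((![u, w] s) b) := by
  rw [Matrix.mul_apply]
  simp only [Matrix.conjTranspose_apply, Matrix.mul_apply, rowsK, Matrix.of_apply,
    Finset.sum_mul]
  rw [Finset.sum_comm]

lemma exists_kraus {d : ℕ} {M : Matrix (Fin d) (Fin d) ℂ} (hM : M.IsHermitian)
    (hMT : Mᵀ = -M) :
    ∃ K : Fin d → Matrix (Fin 2) (Fin d) ℂ,
      (∀ j a b, ((K j) a b).im = 0) ∧ (∑ j, (K j)ᴴ * K j = 1) ∧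
      (∀ j, (K j * M * (K j)ᴴ * Ymat).trace = ((|hM.eigenvalues j| : ℝ) : ℂ)) := by
  set U : Matrix (Fin d) (Fin d) ℂ := (hM.eigenvectorUnitary : Matrix (Fin d) (Fin d) ℂ) with hU
  have hUU : star U * U = 1 := mem_unitaryGroup_iff'.mp hM.eigenvectorUnitary.2
  have hUU' : U * star U = 1 := mem_unitaryGroup_iff.mp hM.eigenvectorUnitary.2
  set v : Fin d → Fin d → ℂ := fun j a => (hM.eigenvectorBasis j) a with hv
  have hUv : ∀ a j, U a j = v j a := fun a j => hM.eigenvectorUnitary_apply a j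
  set xc : Fin d → Fin d → ℂ := fun j a => ((v j a).re : ℂ) with hxc
  set yc : Fin d → Fin d → ℂ := fun j a => ((v j a).im : ℂ) with hyc
  refine ⟨fun j => if 0 ≤ hM.eigenvalues j then rowsK (xc j) (yc j) else rowsK (yc j) (xc j),
    ?_, ?_, ?_⟩
  · intro j a b
    show ((if 0 ≤ hM.eigenvalues j then rowsK (xc j) (yc j)
        else rowsK (yc j) (xc j)) a b).im = 0
    split <;> (fin_cases a <;> simp [rowsK, hxc, hyc])
  · -- completeness
    ext a b
    have hval : ∀ j, ((if 0 ≤ hM.eigenvalues j then rowsK (xc j) (yc j)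
        else rowsK (yc j) (xc j))ᴴ * (if 0 ≤ hM.eigenvalues j then rowsK (xc j) (yc j)
        else rowsK (yc j) (xc j))) a b
        = (star (v j a) * v j b + v j a * star (v j b)) / 2 := by
      intro j
      have hgen : ∀ z w : ℂ, (star ((z.re : ℂ)) * (w.re : ℂ) + star ((z.im : ℂ)) * (w.im : ℂ))
          = (star z * w + z * star w) / 2 := by
        intro z w
        simp only [RCLike.star_def, Complex.conj_ofReal]
        rw [Complex.ext_iff]
        constructor <;>
          simp [Complex.mul_re, Complex.mul_im, Complex.add_re, Complex.add_im,
            Complex.div_re, Complex.div_im, Complex.conj_re, Complex.conj_im,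
            Complex.normSq_apply] <;> ring
      split
      · rw [rowsK_conjT_mul]
        simpa [hxc, hyc] using hgen (v j a) (v j b)
      · rw [rowsK_conjT_mul]
        have := hgen (v j a) (v j b)
        simp only [hxc, hyc] at this ⊢
        rw [← this]; ring
    rw [Matrix.sum_apply]
    simp only [hval]
    have h1' : ∀ a' b', ∑ j, v j a' * star (v j b') = (1 : Matrix (Fin d) (Fin d) ℂ) a' b' := by
      intro a' b'
      rw [← hUU', Matrix.mul_apply]
      exact Finset.sum_congr rfl fun j _ => by rw [Matrix.star_apply, hUv, hUv]
    have h1 := h1' a b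
    have h2 : ∑ j, star (v j a) * v j b = (1 : Matrix (Fin d) (Fin d) ℂ) b a := by
      rw [← h1' b a]
      exact Finset.sum_congr rfl fun j _ => mul_comm _ _
    rw [← Finset.sum_div, Finset.sum_add_distrib, h1, h2]
    have hone : (1 : Matrix (Fin d) (Fin d) ℂ) b a = (1 : Matrix (Fin d) (Fin d) ℂ) a b := by
      by_cases h : a = b <;> simp [Matrix.one_apply, h]
      exact fun h' => absurd h'.symm h
    rw [hone]
    ring
  · -- trace values
    intro j
    set eig : ℝ := hM.eigenvalues j with heig
    have hMab : ∀ a b, M a b = -(M b a) := by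
      intro a b
      have := congrFun (congrFun hMT b) a
      simpa [Matrix.transpose_apply, Matrix.neg_apply] using this
    set Q : (Fin d → ℂ) → (Fin d → ℂ) → ℂ :=
      fun u w => ∑ a, ∑ b, u a * M a b * w b with hQ
    have hQanti : ∀ u w, Q u w = -Q w u := by
      intro u w
      rw [hQ]
      simp only
      rw [Finset.sum_comm, ← Finset.sum_neg_distrib]
      refine Finset.sum_congr rfl fun b _ => ?_
      rw [← Finset.sum_neg_distrib]
      refine Finset.sum_congr rfl fun a _ => ?_
      rw [hMab a b]; ring
    have hQzero : ∀ u, Q u u = 0 := fun u => by linear_combination (hQanti u u) / 2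
    have hmv : ∀ a, ∑ b, M a b * v j b = (eig : ℂ) * v j a := by
      intro a
      have := congrFun (hM.mulVec_eigenvectorBasis j) a
      simpa [Matrix.mulVec, dotProduct, hv, Pi.smul_apply, Complex.real_smul] using this
    have hnorm : ∑ a, star (v j a) * v j a = 1 := by
      have := congrFun (congrFun hUU j) j
      rw [Matrix.mul_apply] at this
      simp only [Matrix.one_apply_eq] at this
      rw [← this]
      exact Finset.sum_congr rfl fun a _ => by rw [Matrix.star_apply, hUv]
    have hqv : Q (star (v j)) (v j) = (eig : ℂ) := by
      rw [hQ]
      simp only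
      calc ∑ a, ∑ b, star (v j) a * M a b * v j b
          = ∑ a, star (v j a) * ((eig : ℂ) * v j a) := by
            refine Finset.sum_congr rfl fun a _ => ?_
            rw [← hmv a, Finset.mul_sum]
            exact Finset.sum_congr rfl fun b _ => by simp only [Pi.star_apply]; ring
        _ = (eig : ℂ) * ∑ a, star (v j a) * v j a := by
            rw [Finset.mul_sum]
            exact Finset.sum_congr rfl fun a _ => by ring
        _ = (eig : ℂ) := by rw [hnorm, mul_one]
    have hstar : ∀ a, star (v j a) = xc j a - Complex.I * yc j a := by
      intro a
      simp [hxc, hyc, Complex.ext_iff]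
    have hvdec : ∀ a, v j a = xc j a + Complex.I * yc j a := by
      intro a
      simp [hxc, hyc, Complex.ext_iff]
    have expand : Q (star (v j)) (v j)
        = Q (xc j) (xc j) + Q (yc j) (yc j)
          + Complex.I * Q (xc j) (yc j) - Complex.I * Q (yc j) (xc j) := by
      rw [hQ]
      simp only [Finset.mul_sum, ← Finset.sum_add_distrib, ← Finset.sum_sub_distrib]
      refine Finset.sum_congr rfl fun a _ => ?_
      refine Finset.sum_congr rfl fun b _ => ?_
      rw [Pi.star_apply, hstar a, hvdec b]
      linear_combination (-(yc j a * M a b * yc j b)) * Complex.I_sq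
    have hQxy : Complex.I * Q (xc j) (yc j) + Complex.I * Q (xc j) (yc j) = (eig : ℂ) := by
      have h := expand
      rw [hQzero, hQzero, hQanti (yc j) (xc j), hqv] at h
      linear_combination -h
    have hsx : star (xc j) = xc j := by
      funext a; simp [hxc]
    have hsy : star (yc j) = yc j := by
      funext a; simp [hyc]
    show ((if 0 ≤ eig then rowsK (xc j) (yc j) else rowsK (yc j) (xc j)) * M *
        (if 0 ≤ eig then rowsK (xc j) (yc j) else rowsK (yc j) (xc j))ᴴ * Ymat).trace
        = ((|eig| : ℝ) : ℂ)
    split_ifs with h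
    · rw [trace_mul_Ymat, rowsK_mul_mul, rowsK_mul_mul]
      have e1 : ∑ a, ∑ b, (![xc j, yc j] 0) a * M a b * star ((![xc j, yc j] 1) b)
          = Q (xc j) (yc j) := by
        simp only [Matrix.cons_val_zero, Matrix.cons_val_one, Matrix.head_cons, hsy, hQ,
          Pi.star_apply]
        refine Finset.sum_congr rfl fun a _ => Finset.sum_congr rfl fun b _ => by
          rw [show star (yc j b) = yc j b from congrFun hsy b]
      have e2 : ∑ a, ∑ b, (![xc j, yc j] 1) a * M a b * star ((![xc j, yc j] 0) b)
          = Q (yc j) (xc j) := by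
        simp only [Matrix.cons_val_zero, Matrix.cons_val_one, Matrix.head_cons, hQ]
        refine Finset.sum_congr rfl fun a _ => Finset.sum_congr rfl fun b _ => by
          rw [show star (xc j b) = xc j b from congrFun hsx b]
      rw [e1, e2, hQanti (yc j) (xc j), abs_of_nonneg h]
      linear_combination hQxy
    · rw [trace_mul_Ymat, rowsK_mul_mul, rowsK_mul_mul]
      have e1 : ∑ a, ∑ b, (![yc j, xc j] 0) a * M a b * star ((![yc j, xc j] 1) b)
          = Q (yc j) (xc j) := by
        simp only [Matrix.cons_val_zero, Matrix.cons_val_one, Matrix.head_cons, hQ]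
        refine Finset.sum_congr rfl fun a _ => Finset.sum_congr rfl fun b _ => by
          rw [show star (xc j b) = xc j b from congrFun hsx b]
      have e2 : ∑ a, ∑ b, (![yc j, xc j] 1) a * M a b * star ((![yc j, xc j] 0) b)
          = Q (xc j) (yc j) := by
        simp only [Matrix.cons_val_zero, Matrix.cons_val_one, Matrix.head_cons, hQ]
        refine Finset.sum_congr rfl fun a _ => Finset.sum_congr rfl fun b _ => by
          rw [show star (yc j b) = yc j b from congrFun hsy b]
      rw [e1, e2, hQanti (yc j) (xc j), abs_of_neg (not_le.mp h)]
      push_cast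
      linear_combination -hQxy

lemma master_identity {d : ℕ} (ρ : Matrix (Fin d) (Fin d) ℂ) (htr : ρ.trace = 1)
    {n : ℕ} (K : Fin n → Matrix (Fin 2) (Fin d) ℂ)
    (hreal : ∀ j a b, ((K j) a b).im = 0)
    (hsum : ∑ j, (K j)ᴴ * K j = 1) :
    ((∑ j, K j * ρ * (K j)ᴴ) * Pplus).trace.re
      = 1/2 + (∑ j, ((ρ - ρᵀ) * ((K j)ᴴ * Ymat * K j)).trace).re / 4 := by
  have htrσ : (∑ j, (K j * ρ * (K j)ᴴ)).trace = 1 := by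
    rw [Matrix.trace_sum]
    calc ∑ j, (K j * ρ * (K j)ᴴ).trace = ∑ j, (ρ * ((K j)ᴴ * K j)).trace := by
          refine Finset.sum_congr rfl fun j _ => ?_
          rw [Matrix.trace_mul_cycle, ← Matrix.mul_assoc, Matrix.trace_mul_comm,
            Matrix.mul_assoc]
      _ = (ρ * ∑ j, (K j)ᴴ * K j).trace := by
          rw [Matrix.mul_sum, Matrix.trace_sum]
      _ = 1 := by rw [hsum, Matrix.mul_one, htr]
  have hKT : ∀ j, (K j)ᴴ = (K j)ᵀ := fun j => real_entries_conjTranspose (hreal j)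
  have hY : ((∑ j, (K j * ρ * (K j)ᴴ)) * Ymat).trace
      = (1/2 : ℂ) * ∑ j, ((ρ - ρᵀ) * ((K j)ᴴ * Ymat * K j)).trace := by
    rw [Matrix.sum_mul, Matrix.trace_sum, Finset.mul_sum]
    refine Finset.sum_congr rfl fun j _ => ?_
    rw [key_identity ρ (K j) (hKT j)]
    rw [hKT j]
  rw [trace_mul_Pplus, htrσ, hY, mul_one]
  set T : ℂ := ∑ j, ((ρ - ρᵀ) * ((K j)ᴴ * Ymat * K j)).trace with hT
  rw [Complex.add_re, Complex.mul_re, Complex.mul_re]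
  norm_num
  ring

theorem fidelity_of_imaginarity_trace_norm {d : ℕ}
    (ρ : Matrix (Fin d) (Fin d) ℂ) (hρ : ρ.PosSemidef) (htr : ρ.trace = 1) :
    IsGreatest {x : ℝ | ∃ (n : ℕ) (K : Fin n → Matrix (Fin 2) (Fin d) ℂ),
        (∀ j a b, ((K j) a b).im = 0) ∧
        (∑ j, (K j)ᴴ * K j = 1) ∧
        x = ((∑ j, K j * ρ * (K j)ᴴ) * Pplus).trace.re}
      (1/2 + traceNorm (ρ - ρᵀ) / 4) := by
  have hM : (ρ - ρᵀ).IsHermitian := hρ.1.sub hρ.1.transpose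
  have hMT : (ρ - ρᵀ)ᵀ = -(ρ - ρᵀ) := by
    rw [Matrix.transpose_sub, Matrix.transpose_transpose, neg_sub]
  have htn : traceNorm (ρ - ρᵀ) = ∑ i, |hM.eigenvalues i| := traceNorm_herm hM
  constructor
  · -- membership
    obtain ⟨K, hreal, hsum, htrval⟩ := exists_kraus hM hMT
    refine ⟨d, K, hreal, hsum, ?_⟩
    rw [master_identity ρ htr K hreal hsum, htn]
    have hlink : ∀ j, ((ρ - ρᵀ) * ((K j)ᴴ * Ymat * K j)).trace
        = ((|hM.eigenvalues j| : ℝ) : ℂ) := by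
      intro j
      have h2 := key_identity (ρ - ρᵀ) (K j) (real_entries_conjTranspose (hreal j))
      rw [hMT, sub_neg_eq_add, htrval j] at h2
      have : ((ρ - ρᵀ) + (ρ - ρᵀ)) * ((K j)ᵀ * Ymat * K j)
          = (ρ - ρᵀ) * ((K j)ᵀ * Ymat * K j) + (ρ - ρᵀ) * ((K j)ᵀ * Ymat * K j) :=
        Matrix.add_mul _ _ _
      rw [this, Matrix.trace_add] at h2
      rw [real_entries_conjTranspose (hreal j)]
      linear_combination -h2
    rw [show (∑ j, ((ρ - ρᵀ) * ((K j)ᴴ * Ymat * K j)).trace)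
        = ∑ j, ((|hM.eigenvalues j| : ℝ) : ℂ) from Finset.sum_congr rfl fun j _ => hlink j]
    rw [Complex.re_sum]
    simp [Complex.ofReal_re]
  · -- upper bound
    rintro x ⟨n, K, hreal, hsum, rfl⟩
    rw [master_identity ρ htr K hreal hsum, htn]
    have hub := upper_bound hM K hsum
    have h4 : (0:ℝ) < 4 := by norm_num
    have : (∑ j, ((ρ - ρᵀ) * ((K j)ᴴ * Ymat * K j)).trace).re
        ≤ ∑ i, |hM.eigenvalues i| := hub
    linarith
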